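/- Let m ∈ ℕ, Π ⊆ ℝ[x_1,…,x_m] be a polynomial subspace, P ⊆ ℝ^m a finite non-empty set, H = Q_H^{-1}(0) a hyperplane defined by Q_H ∈ Π_{m,1,1} \ {0} such that every affine transformation mapping H to ℝ^{m−1}×{0} is canonical with respect to Π, and suppose P is unisolvent with respect to (Π, H). Let f : ℝ^m → ℝ be a function and suppose Q_1 ∈ Π_{|H} and Q_2 ∈ Π_{|H̄} satisfy (i) Q_1(p) = f(p) for all p ∈ P ∩ H and (ii) Q_2(p) = (f(p) − Q_1(p))/Q_H(p) for all p ∈ P \ H. Then Q = Q_1 + Q_H·Q_2 ∈ Π, and Q is the unique polynomial in Π interpolating f on P, i.e., Q(p) = f(p) for all p ∈ P. -/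

import Mathlib

open MvPolynomial
open scoped Classical

noncomputable section

/-- The pullback `τ^*` of a polynomial along the affine transformation
`τ(x) = B x + b`, i.e. `τ^*(Q)(x) = Q(τ(x))`. -/
def affinePullback {m : ℕ} (B : Matrix (Fin m) (Fin m) ℝ) (b : Fin m → ℝ) :
    MvPolynomial (Fin m) ℝ →ₐ[ℝ] MvPolynomial (Fin m) ℝ :=
  aeval fun i => (∑ j, C (B i j) * X j) + C (b i)

namespace IShelp

variable {m : ℕ}

lemma eval_aeval (g : Fin m → MvPolynomial (Fin m) ℝ) (x : Fin m → ℝ)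
    (Q : MvPolynomial (Fin m) ℝ) :
    eval x (aeval g Q) = eval (fun i => eval x (g i)) Q := by
  induction Q using MvPolynomial.induction_on with
  | C a => simp
  | add p q hp hq => rw [map_add, map_add, map_add, hp, hq]
  | mul_X p i hp => simp only [map_mul, hp, aeval_X, eval_X]

lemma aeval_aeval (g₁ g₂ : Fin m → MvPolynomial (Fin m) ℝ)
    (Q : MvPolynomial (Fin m) ℝ) :
    aeval g₂ (aeval g₁ Q) = aeval (fun i => aeval g₂ (g₁ i)) Q :=
  AlgHom.congr_fun (comp_aeval g₁ (aeval g₂)) Q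

lemma eval_pb (B : Matrix (Fin m) (Fin m) ℝ) (b : Fin m → ℝ) (x : Fin m → ℝ)
    (Q : MvPolynomial (Fin m) ℝ) :
    eval x (affinePullback B b Q) = eval (B.mulVec x + b) Q := by
  rw [affinePullback, eval_aeval]
  have h : (fun i => eval x ((∑ j, C (B i j) * X j) + C (b i))) = B.mulVec x + b := by
    funext i
    simp [Matrix.mulVec, dotProduct]
  rw [h]

lemma pb_pb (B₁ B₂ : Matrix (Fin m) (Fin m) ℝ) (b₁ b₂ : Fin m → ℝ)
    (Q : MvPolynomial (Fin m) ℝ) :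
    affinePullback B₂ b₂ (affinePullback B₁ b₁ Q)
      = affinePullback (B₁ * B₂) (B₁.mulVec b₂ + b₁) Q := by
  rw [affinePullback, affinePullback, affinePullback, aeval_aeval]
  have h : (fun i => (aeval fun i => (∑ j, C (B₂ i j) * X j) + C (b₂ i))
      ((∑ j, C (B₁ i j) * X j) + C (b₁ i)))
      = fun i => (∑ j, C ((B₁ * B₂) i j) * X j) + C ((B₁.mulVec b₂ + b₁) i) := by
    funext i
    rw [map_add, map_sum, aeval_C]
    have h1 : ∀ j ∈ Finset.univ, (aeval fun i => (∑ j, C (B₂ i j) * X j) + C (b₂ i))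
        (C (B₁ i j) * X j)
        = (∑ l, C (B₁ i j * B₂ j l) * X l) + C (B₁ i j * b₂ j) := by
      intro j _
      rw [map_mul, aeval_C, aeval_X, MvPolynomial.algebraMap_eq, mul_add, Finset.mul_sum,
        ← map_mul, add_left_inj]
      refine Finset.sum_congr rfl fun l _ => ?_
      rw [← mul_assoc, ← map_mul]
    rw [MvPolynomial.algebraMap_eq, Finset.sum_congr rfl h1, Finset.sum_add_distrib]
    have h2 : (∑ j, ∑ l, C (B₁ i j * B₂ j l) * X l) = ∑ l, C ((B₁ * B₂) i l) * X l := by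
      rw [Finset.sum_comm]
      refine Finset.sum_congr rfl fun l _ => ?_
      rw [← Finset.sum_mul, ← map_sum, Matrix.mul_apply]
    have h3 : (∑ j, C (B₁ i j * b₂ j) : MvPolynomial (Fin m) ℝ) + C (b₁ i)
        = C ((B₁.mulVec b₂ + b₁) i) := by
      rw [← map_sum, ← map_add]
      congr 1
    rw [h2, add_assoc, h3]

  rw [h]

lemma pb_id (Q : MvPolynomial (Fin m) ℝ) : affinePullback 1 0 Q = Q := by
  rw [affinePullback]
  have h : (fun i : Fin m => (∑ j, C ((1 : Matrix (Fin m) (Fin m) ℝ) i j) * X j)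
      + C ((0 : Fin m → ℝ) i)) = X := by
    funext i
    rw [Finset.sum_eq_single i]
    · simp [Matrix.one_apply]
    · intro j _ hj
      simp [Matrix.one_apply, Ne.symm hj]
    · simp
  rw [h, aeval_X_left]
  rfl


lemma pb_cancel {M : Matrix (Fin m) (Fin m) ℝ} (hM : IsUnit M) (w : Fin m → ℝ)
    (Q : MvPolynomial (Fin m) ℝ) :
    affinePullback M⁻¹ (-(M⁻¹.mulVec w)) (affinePullback M w Q) = Q := by
  have hdet : IsUnit M.det := (Matrix.isUnit_iff_isUnit_det M).mp hM
  rw [pb_pb]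
  have h1 : M * M⁻¹ = 1 := Matrix.mul_nonsing_inv M hdet
  have h2 : M.mulVec (-(M⁻¹.mulVec w)) + w = 0 := by
    rw [Matrix.mulVec_neg, Matrix.mulVec_mulVec, h1]
    simp
  rw [h1, h2, pb_id]

lemma pb_inj {M : Matrix (Fin m) (Fin m) ℝ} (hM : IsUnit M) (w : Fin m → ℝ) :
    Function.Injective (affinePullback M w) := by
  intro p q h
  have := congrArg (affinePullback M⁻¹ (-(M⁻¹.mulVec w))) h
  rwa [pb_cancel hM, pb_cancel hM] at this

/-- `Q` does not involve the variable `X k`. -/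
def Xfree (k : Fin m) (Q : MvPolynomial (Fin m) ℝ) : Prop :=
  ∀ d ∈ Q.support, d k = 0

lemma Xfree_zero (k : Fin m) : Xfree k 0 := by
  intro d hd
  simp at hd

lemma Xfree_add {k : Fin m} {p q : MvPolynomial (Fin m) ℝ}
    (hp : Xfree k p) (hq : Xfree k q) : Xfree k (p + q) := by
  intro d hd
  rcases Finset.mem_union.mp (MvPolynomial.support_add hd) with h | h
  · exact hp d h
  · exact hq d h

lemma Xfree_mul {k : Fin m} {p q : MvPolynomial (Fin m) ℝ}
    (hp : Xfree k p) (hq : Xfree k q) : Xfree k (p * q) := by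
  intro d hd
  have := MvPolynomial.support_mul p q hd
  rw [Finset.mem_add] at this
  obtain ⟨d1, h1, d2, h2, rfl⟩ := this
  rw [Finsupp.add_apply, hp d1 h1, hq d2 h2]

lemma Xfree_C (k : Fin m) (c : ℝ) : Xfree k (C c) := by
  intro d hd
  rw [MvPolynomial.mem_support_iff, MvPolynomial.coeff_C] at hd
  by_cases h : (0 : Fin m →₀ ℕ) = d
  · rw [← h]; rfl
  · simp [h] at hd

lemma Xfree_X {k j : Fin m} (h : j ≠ k) : Xfree k (X j) := by
  intro d hd
  rw [MvPolynomial.mem_support_iff, MvPolynomial.coeff_X'] at hd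
  by_cases h2 : Finsupp.single j 1 = d
  · rw [← h2, Finsupp.single_apply, if_neg h]
  · simp [h2] at hd

lemma Xfree_sum {k : Fin m} {ι : Type*} (s : Finset ι)
    (f : ι → MvPolynomial (Fin m) ℝ) (h : ∀ i ∈ s, Xfree k (f i)) :
    Xfree k (∑ i ∈ s, f i) :=
  Finset.sum_induction f (Xfree k) (fun _ _ => Xfree_add) (Xfree_zero k) h

lemma Xfree_aeval {k : Fin m} (g : Fin m → MvPolynomial (Fin m) ℝ)
    (hg : ∀ i, Xfree k (g i)) (Q : MvPolynomial (Fin m) ℝ) :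
    Xfree k (aeval g Q) := by
  induction Q using MvPolynomial.induction_on with
  | C a => rw [aeval_C, MvPolynomial.algebraMap_eq]; exact Xfree_C k a
  | add p q hp hq => rw [map_add]; exact Xfree_add hp hq
  | mul_X p i hp => rw [map_mul, aeval_X]; exact Xfree_mul hp (hg i)

lemma Xfree_pb {k : Fin m} {M : Matrix (Fin m) (Fin m) ℝ} (w : Fin m → ℝ)
    (hcol : ∀ i, M i k = 0) (Q : MvPolynomial (Fin m) ℝ) :
    Xfree k (affinePullback M w Q) := by
  rw [affinePullback]
  refine Xfree_aeval _ (fun i => ?_) Q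
  refine Xfree_add (Xfree_sum _ _ fun j _ => ?_) (Xfree_C k _)
  by_cases hj : j = k
  · rw [hj, hcol i, map_zero, zero_mul]; exact Xfree_zero k
  · exact Xfree_mul (Xfree_C k _) (Xfree_X hj)




lemma deg_le_one_classify {d : Fin m →₀ ℕ} (hd : (d.sum fun _ e => e) ≤ 1) :
    d = 0 ∨ ∃ j, d = Finsupp.single j 1 := by
  by_cases h0 : d = 0
  · exact Or.inl h0
  right
  obtain ⟨j, hj⟩ : ∃ j, d j ≠ 0 := by
    by_contra hc
    push_neg at hc
    exact h0 (Finsupp.ext fun i => hc i)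
  have hsum : (d.sum fun _ e => e) = ∑ i ∈ d.support, d i := rfl
  have hjs : j ∈ d.support := Finsupp.mem_support_iff.mpr hj
  have hle : d j ≤ ∑ i ∈ d.support, d i :=
    Finset.single_le_sum (fun i _ => Nat.zero_le _) hjs
  refine ⟨j, Finsupp.ext fun i => ?_⟩
  rw [Finsupp.single_apply]
  by_cases hij : j = i
  · subst hij
    rw [if_pos rfl]
    rw [hsum] at hd
    omega
  · rw [if_neg hij]
    by_contra hi
    have his : i ∈ d.support := Finsupp.mem_support_iff.mpr hi
    have hpair : d i + d j ≤ ∑ l ∈ d.support, d l := by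
      have hsub : ({i, j} : Finset (Fin m)) ⊆ d.support := by
        intro l hl
        rcases Finset.mem_insert.mp hl with rfl | hl
        · exact his
        · rwa [Finset.mem_singleton.mp hl]
      calc d i + d j = ∑ l ∈ ({i, j} : Finset (Fin m)), d l := by
            rw [Finset.sum_pair (fun h => hij h.symm)]
          _ ≤ ∑ l ∈ d.support, d l := Finset.sum_le_sum_of_subset hsub
    omega

lemma rep_of_totalDegree_le_one {Q : MvPolynomial (Fin m) ℝ} (h : Q.totalDegree ≤ 1) :
    Q = (∑ i, C (coeff (Finsupp.single i 1) Q) * X i) + C (coeff 0 Q) := by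
  apply MvPolynomial.ext
  intro d
  have hco : ∀ i : Fin m, coeff d (C (coeff (Finsupp.single i 1) Q) * X i)
      = coeff (Finsupp.single i 1) Q * (if Finsupp.single i 1 = d then 1 else 0) := by
    intro i
    rw [MvPolynomial.coeff_C_mul, MvPolynomial.coeff_X']
  rw [MvPolynomial.coeff_add, MvPolynomial.coeff_sum, Finset.sum_congr rfl fun i _ => hco i,
    MvPolynomial.coeff_C]
  by_cases hd : d = 0
  · subst hd
    rw [if_pos rfl]
    have : ∀ i : Fin m, (Finsupp.single i 1 : Fin m →₀ ℕ) ≠ 0 := by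
      intro i
      simp [Finsupp.single_eq_zero]
    simp [this]
  · rw [if_neg (fun h => hd h.symm), add_zero]
    by_cases hs : d ∈ Q.support
    · have hdeg := MvPolynomial.le_totalDegree hs
      have hd1 : (d.sum fun _ e => e) ≤ 1 := le_trans hdeg h
      rcases deg_le_one_classify hd1 with h0 | ⟨j, rfl⟩
      · exact absurd h0 hd
      · rw [Finset.sum_eq_single j]
        · rw [if_pos rfl, mul_one]
        · intro i _ hij
          rw [if_neg, mul_zero]
          intro hc
          exact hij (by
            have := Finsupp.single_left_injective (α := Fin m) (one_ne_zero (α := ℕ))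
            exact this hc)
        · intro hc
          exact absurd (Finset.mem_univ j) hc
    · rw [MvPolynomial.notMem_support_iff] at hs
      rw [hs]
      rw [Finset.sum_eq_zero]
      intro i _
      by_cases hc : Finsupp.single i 1 = d
      · subst hc
        rw [if_pos rfl, mul_one]
        exact hs
      · rw [if_neg hc, mul_zero]



lemma coeffs_mem {M : Type*} [AddCommGroup M] [Module ℝ M] (Pi : Submodule ℝ M) :
    ∀ (N : ℕ) (T : ℕ → M),
      (∀ t : ℝ, t ≠ 0 → (∑ j ∈ Finset.range (N+1), t^j • T j) ∈ Pi) →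
      ∀ j, j ≤ N → T j ∈ Pi := by
  intro N
  induction N with
  | zero =>
    intro T h j hj
    interval_cases j
    simpa using h 1 one_ne_zero
  | succ N ih =>
    intro T h
    have h2 : ∀ t : ℝ, t ≠ 0 →
        (∑ j ∈ Finset.range (N+1), t^j • ((((2:ℝ)^j - 2^(N+1))) • T j)) ∈ Pi := by
      intro t ht
      have e1 := h (2*t) (by simp [ht])
      have e2 := Submodule.smul_mem Pi ((2:ℝ)^(N+1)) (h t ht)
      have e3 := Submodule.sub_mem Pi e1 e2
      have heq : (∑ j ∈ Finset.range (N+2), (2*t)^j • T j)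
          - (2:ℝ)^(N+1) • (∑ j ∈ Finset.range (N+2), t^j • T j)
          = ∑ j ∈ Finset.range (N+1), t^j • ((((2:ℝ)^j - 2^(N+1))) • T j) := by
        rw [Finset.smul_sum, ← Finset.sum_sub_distrib,
          Finset.sum_range_succ]
        have htop : (2*t)^(N+1) • T (N+1) - (2:ℝ)^(N+1) • (t^(N+1) • T (N+1)) = 0 := by
          rw [smul_smul, mul_pow]
          abel
        rw [htop, add_zero]
        refine Finset.sum_congr rfl fun j _ => ?_
        rw [smul_smul, smul_smul, ← sub_smul]
        have hr : (2*t)^j - 2^(N+1)*t^j = t^j * ((2:ℝ)^j - 2^(N+1)) := by ring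
        rw [hr]
      rwa [heq] at e3
    have hTs : ∀ j, j ≤ N → T j ∈ Pi := by
      intro j hj
      have hmem := ih (fun j => (((2:ℝ)^j - 2^(N+1))) • T j) h2 j hj
      have hne : ((2:ℝ)^j - 2^(N+1)) ≠ 0 := by
        have : (2:ℝ)^j < 2^(N+1) := by
          apply pow_lt_pow_right₀ (by norm_num)
          omega
        linarith
      have := Submodule.smul_mem Pi ((((2:ℝ)^j - 2^(N+1)))⁻¹) hmem
      rwa [smul_smul, inv_mul_cancel₀ hne, one_smul] at this
    intro j hj
    by_cases hjN : j ≤ N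
    · exact hTs j hjN
    · have hj1 : j = N+1 := by omega
      subst hj1
      have e1 := h 1 one_ne_zero
      simp only [one_pow, one_smul] at e1
      rw [Finset.sum_range_succ] at e1
      have e2 : (∑ j ∈ Finset.range (N+1), T j) ∈ Pi :=
        Submodule.sum_mem Pi fun j hjmem => hTs j (by
          have := Finset.mem_range.mp hjmem
          omega)
      have := Submodule.sub_mem Pi e1 e2
      rwa [add_sub_cancel_left] at this




def dotR (g x : Fin m → ℝ) : ℝ := ∑ i, g i * x i

def affP (g : Fin m → ℝ) (e : ℝ) : MvPolynomial (Fin m) ℝ :=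
  (∑ i, C (g i) * X i) + C e

lemma eval_affP (g : Fin m → ℝ) (e : ℝ) (x : Fin m → ℝ) :
    eval x (affP g e) = dotR g x + e := by
  simp [affP, dotR]

def Rmat (g w : Fin m → ℝ) (t : ℝ) : Matrix (Fin m) (Fin m) ℝ :=
  fun i j => (if i = j then 1 else 0) - (1-t) * w i * g j

def vvec (w : Fin m → ℝ) (e t : ℝ) : Fin m → ℝ :=
  fun i => -((1-t) * e * w i)

def rapp (g w : Fin m → ℝ) (e t : ℝ) (x : Fin m → ℝ) : Fin m → ℝ :=
  fun i => x i - (1-t) * (dotR g x + e) * w i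

lemma mat_ext_mulVec {A B : Matrix (Fin m) (Fin m) ℝ}
    (h : ∀ x, A.mulVec x = B.mulVec x) : A = B := by
  ext i j
  have := congrFun (h (Pi.single j 1)) i
  simpa [Matrix.mulVec_single] using this

lemma mulVec_r (g w : Fin m → ℝ) (e t : ℝ) (x : Fin m → ℝ) :
    (Rmat g w t).mulVec x + vvec w e t = rapp g w e t x := by
  funext i
  simp only [Pi.add_apply, Matrix.mulVec, dotProduct, Rmat, vvec, rapp, dotR]
  rw [Finset.sum_congr rfl (fun j _ => sub_mul (if i = j then 1 else 0) _ (x j)),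
    Finset.sum_sub_distrib]
  have hdelta : (∑ j, (if i = j then 1 else 0) * x j) = x i := by
    rw [Finset.sum_eq_single i (fun j _ hj => by rw [if_neg (Ne.symm hj), zero_mul])
      (fun h => absurd (Finset.mem_univ i) h), if_pos rfl, one_mul]
  rw [hdelta]
  have hkey : (∑ j, (1-t) * w i * g j * x j) = (1-t) * (∑ j, g j * x j) * w i := by
    rw [Finset.mul_sum, Finset.sum_mul]
    exact Finset.sum_congr rfl fun j _ => by ring
  rw [hkey]
  ring

lemma dot_rapp (a g w : Fin m → ℝ) (e t : ℝ) (x : Fin m → ℝ) :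
    dotR a (rapp g w e t x)
      = dotR a x - (1-t) * (dotR g x + e) * (dotR a w) := by
  simp only [rapp, dotR]
  generalize (1-t) * ((∑ i, g i * x i) + e) = K
  rw [Finset.mul_sum, ← Finset.sum_sub_distrib]
  exact Finset.sum_congr rfl fun i _ => by ring

lemma rapp_rapp (g w : Fin m → ℝ) (e : ℝ) (hgw : dotR g w = 1) (t t' : ℝ) (x : Fin m → ℝ) :
    rapp g w e t (rapp g w e t' x) = rapp g w e (t * t') x := by
  funext i
  have hval : dotR g (rapp g w e t' x) + e = t' * (dotR g x + e) := by
    rw [dot_rapp g g w e t' x, hgw]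
    ring
  simp only [rapp] at hval ⊢
  rw [hval]
  ring

lemma rapp_one (g w : Fin m → ℝ) (e : ℝ) (x : Fin m → ℝ) : rapp g w e 1 x = x := by
  funext i
  simp [rapp]

lemma Rmat_mulVec_eq (g w : Fin m → ℝ) (t : ℝ) (x : Fin m → ℝ) :
    (Rmat g w t).mulVec x = rapp g w 0 t x := by
  have := mulVec_r g w 0 t x
  have hv : vvec w 0 t = 0 := by funext i; simp [vvec]
  rw [hv, add_zero] at this
  exact this

lemma Rmat_mul (g w : Fin m → ℝ) (hgw : dotR g w = 1) (t t' : ℝ) :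
    Rmat g w t * Rmat g w t' = Rmat g w (t * t') := by
  apply mat_ext_mulVec
  intro x
  rw [← Matrix.mulVec_mulVec, Rmat_mulVec_eq, Rmat_mulVec_eq, Rmat_mulVec_eq,
    rapp_rapp g w 0 hgw]

lemma Rmat_one (g w : Fin m → ℝ) : Rmat g w 1 = (1 : Matrix (Fin m) (Fin m) ℝ) := by
  apply mat_ext_mulVec
  intro x
  rw [Rmat_mulVec_eq, rapp_one, Matrix.one_mulVec]

lemma Rmat_unit (g w : Fin m → ℝ) (hgw : dotR g w = 1) {t : ℝ} (ht : t ≠ 0) :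
    IsUnit (Rmat g w t) := by
  have h1 : Rmat g w t * Rmat g w t⁻¹ = 1 := by
    rw [Rmat_mul g w hgw, mul_inv_cancel₀ ht, Rmat_one]
  have h2 : Rmat g w t⁻¹ * Rmat g w t = 1 := by
    rw [Rmat_mul g w hgw, inv_mul_cancel₀ ht, Rmat_one]
  exact ⟨⟨Rmat g w t, Rmat g w t⁻¹, h1, h2⟩, rfl⟩

lemma vvec_one (w : Fin m → ℝ) (e : ℝ) : vvec w e 1 = 0 := by
  funext i
  simp [vvec]


section Phi
variable (g w : Fin m → ℝ) (e : ℝ)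

def PhiMap : MvPolynomial (Fin m) ℝ →ₐ[ℝ] Polynomial (MvPolynomial (Fin m) ℝ) :=
  aeval fun i => Polynomial.C (X i - C (w i) * affP g e)
    + Polynomial.X * Polynomial.C (C (w i) * affP g e)

lemma PhiMap_C (r : ℝ) : PhiMap g w e (C r) = Polynomial.C (C r) := by
  rw [PhiMap, aeval_C]
  rfl

lemma PhiMap_X (i : Fin m) : PhiMap g w e (X i)
    = Polynomial.C (X i - C (w i) * affP g e)
      + Polynomial.X * Polynomial.C (C (w i) * affP g e) := by
  rw [PhiMap, aeval_X]

lemma pb_r_X (t : ℝ) (i : Fin m) :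
    (∑ j, C (Rmat g w t i j) * X j) + C (vvec w e t i)
      = (X i - C (w i) * affP g e) + C t * (C (w i) * affP g e) := by
  have h1 : (∑ j, C (Rmat g w t i j) * X j)
      = X i - (1 - C t) * C (w i) * (∑ j, C (g j) * X j) := by
    have hsplit : ∀ j ∈ Finset.univ, C (Rmat g w t i j) * X j
        = C (if i = j then (1:ℝ) else 0) * X j
          - (1 - C t) * C (w i) * (C (g j) * X j) := by
      intro j _
      have : Rmat g w t i j = (if i = j then (1:ℝ) else 0) - (1-t) * w i * g j := rfl
      rw [this, map_sub, sub_mul]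
      congr 1
      rw [map_mul, map_mul, map_sub, map_one]
      ring
    rw [Finset.sum_congr rfl hsplit, Finset.sum_sub_distrib]
    congr 1
    · rw [Finset.sum_eq_single i
        (fun j _ hj => by rw [if_neg (Ne.symm hj), map_zero, zero_mul])
        (fun h => absurd (Finset.mem_univ i) h), if_pos rfl, map_one, one_mul]
    · rw [Finset.mul_sum]
  have h2 : (C (vvec w e t i) : MvPolynomial (Fin m) ℝ)
      = -((1 - C t) * C e * C (w i)) := by
    have : vvec w e t i = -((1-t) * e * w i) := rfl
    rw [this, map_neg, map_mul, map_mul, map_sub, map_one]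
  rw [h1, h2, affP]
  ring

lemma eval_PhiMap (t : ℝ) (Q : MvPolynomial (Fin m) ℝ) :
    Polynomial.eval (C t) (PhiMap g w e Q)
      = affinePullback (Rmat g w t) (vvec w e t) Q := by
  induction Q using MvPolynomial.induction_on with
  | C r =>
    rw [PhiMap_C, Polynomial.eval_C, affinePullback, aeval_C]
    rfl
  | add p q hp hq => rw [map_add, Polynomial.eval_add, hp, hq, map_add]
  | mul_X p i hp =>
    rw [show PhiMap g w e (p * X i) = PhiMap g w e p * PhiMap g w e (X i) from
        map_mul _ _ _,
      Polynomial.eval_mul, hp,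
      show (affinePullback (Rmat g w t) (vvec w e t)) (p * X i)
        = (affinePullback (Rmat g w t) (vvec w e t)) p
          * (affinePullback (Rmat g w t) (vvec w e t)) (X i) from map_mul _ _ _]
    congr 1
    rw [PhiMap_X, Polynomial.eval_add, Polynomial.eval_C, Polynomial.eval_mul,
      Polynomial.eval_X, Polynomial.eval_C]
    rw [show (affinePullback (Rmat g w t) (vvec w e t)) (X i)
      = (∑ j, C (Rmat g w t i j) * X j) + C (vvec w e t i) from by
        rw [affinePullback, aeval_X]]
    rw [pb_r_X]

lemma coeff_zero_Phi (Q : MvPolynomial (Fin m) ℝ) :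
    (PhiMap g w e Q).coeff 0 = affinePullback (Rmat g w 0) (vvec w e 0) Q := by
  rw [Polynomial.coeff_zero_eq_eval_zero]
  have h := eval_PhiMap g w e 0 Q
  rwa [map_zero] at h

lemma pb_r_eq_sum (t : ℝ) (Q : MvPolynomial (Fin m) ℝ) :
    affinePullback (Rmat g w t) (vvec w e t) Q
      = ∑ j ∈ Finset.range ((PhiMap g w e Q).natDegree + 1),
          t^j • (PhiMap g w e Q).coeff j := by
  rw [← eval_PhiMap, Polynomial.eval_eq_sum_range]
  refine Finset.sum_congr rfl fun j _ => ?_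
  rw [← map_pow, mul_comm, ← MvPolynomial.smul_eq_C_mul]

lemma affP_dvd_coeff (Q : MvPolynomial (Fin m) ℝ) :
    ∀ j, 1 ≤ j → affP g e ∣ (PhiMap g w e Q).coeff j := by
  induction Q using MvPolynomial.induction_on with
  | C r =>
    intro j hj
    rw [PhiMap_C, Polynomial.coeff_C, if_neg (by omega)]
    exact dvd_zero _
  | add p q hp hq =>
    intro j hj
    rw [map_add, Polynomial.coeff_add]
    exact dvd_add (hp j hj) (hq j hj)
  | mul_X p i hp =>
    intro j hj
    rw [map_mul, PhiMap_X, mul_add, Polynomial.coeff_add]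
    apply dvd_add
    · rw [Polynomial.coeff_mul_C]
      exact (hp j hj).mul_right _
    · rw [← mul_assoc, Polynomial.coeff_mul_C]
      exact Dvd.dvd.mul_left (dvd_mul_left (affP g e) (C (w i))) _

lemma pb_r_one (Q : MvPolynomial (Fin m) ℝ) :
    affinePullback (Rmat g w 1) (vvec w e 1) Q = Q := by
  rw [Rmat_one, vvec_one, pb_id]

end Phi

lemma dotR_affcomb (a x p q : Fin m → ℝ) (s t : ℝ) :
    dotR a (fun i => x i + s * p i + t * q i)
      = dotR a x + s * dotR a p + t * dotR a q := by
  unfold dotR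
  rw [Finset.mul_sum, Finset.mul_sum, ← Finset.sum_add_distrib, ← Finset.sum_add_distrib]
  exact Finset.sum_congr rfl fun i _ => by ring

lemma mulVec_aff2 (p q g : Fin m → ℝ) (k : Fin m) (sh x : Fin m → ℝ) :
    (Matrix.of fun i j => (if i = j then (1:ℝ) else 0) + p i * g j
        + q i * (if j = k then 1 else 0)).mulVec x + sh
      = fun i => x i + (dotR g x) * p i + x k * q i + sh i := by
  funext i
  simp only [Pi.add_apply, Matrix.mulVec, dotProduct, Matrix.of_apply]
  rw [Finset.sum_congr rfl (fun j _ => add_mul ((if i = j then (1:ℝ) else 0) + p i * g j)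
      (q i * (if j = k then 1 else 0)) (x j)),
    Finset.sum_add_distrib,
    Finset.sum_congr rfl (fun j _ => add_mul (if i = j then (1:ℝ) else 0)
      (p i * g j) (x j)),
    Finset.sum_add_distrib]
  have hdelta : (∑ j, (if i = j then (1:ℝ) else 0) * x j) = x i := by
    rw [Finset.sum_eq_single i (fun j _ hj => by rw [if_neg (Ne.symm hj), zero_mul])
      (fun h => absurd (Finset.mem_univ i) h), if_pos rfl, one_mul]
  have hA : (∑ j, p i * g j * x j) = (dotR g x) * p i := by
    rw [dotR, Finset.sum_mul]
    exact Finset.sum_congr rfl fun j _ => by ring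
  have hB : (∑ j, q i * (if j = k then (1:ℝ) else 0) * x j) = x k * q i := by
    rw [Finset.sum_eq_single k
      (fun j _ hj => by rw [if_neg hj, mul_zero, zero_mul])
      (fun h => absurd (Finset.mem_univ k) h), if_pos rfl]
    ring
  rw [hdelta, hA, hB]

/-- Existence of an affine involution swapping `{x | ⟨a,x⟩ + c = 0}` with `{x | x k = 0}`. -/
lemma s_exists (a : Fin m → ℝ) (ha : a ≠ 0) (k : Fin m) (c : ℝ) :
    ∃ (S : Matrix (Fin m) (Fin m) ℝ) (sh : Fin m → ℝ) (μ : ℝ),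
      μ ≠ 0 ∧ S * S = 1 ∧
      (∀ x, S.mulVec (S.mulVec x + sh) + sh = x) ∧
      (∀ x, dotR a (S.mulVec x + sh) + c = μ * x k) ∧
      (∀ x, (S.mulVec x + sh) k = μ⁻¹ * (dotR a x + c)) := by
  obtain ⟨q, hqk, hμ⟩ : ∃ q : Fin m → ℝ, q k = -1 ∧ dotR a q ≠ 0 := by
    by_cases hak : a k ≠ 0
    · refine ⟨fun i => if i = k then -1 else 0, by simp, ?_⟩
      have hd : dotR a (fun i => if i = k then -1 else 0) = -(a k) := by
        rw [dotR, Finset.sum_eq_single k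
          (fun i _ hik => by rw [if_neg hik, mul_zero])
          (fun h => absurd (Finset.mem_univ k) h), if_pos rfl]
        ring
      rw [hd]
      exact neg_ne_zero.mpr hak
    · push_neg at hak
      obtain ⟨j, hj⟩ : ∃ j, a j ≠ 0 := by
        by_contra hc
        push_neg at hc
        exact ha (funext fun i => hc i)
      have hjk : j ≠ k := fun h => hj (h ▸ hak)
      refine ⟨fun i => if i = k then -1 else if i = j then (a j)⁻¹ else 0, by simp, ?_⟩
      have hd : dotR a (fun i => if i = k then -1 else if i = j then (a j)⁻¹ else 0)
          = 1 := by
        rw [dotR, Finset.sum_eq_single j (fun i _ hij => ?_)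
          (fun h => absurd (Finset.mem_univ j) h)]
        · rw [if_neg hjk, if_pos rfl, mul_inv_cancel₀ hj]
        · by_cases hik : i = k
          · rw [if_pos hik, hik, hak, zero_mul]
          · rw [if_neg hik, if_neg hij, mul_zero]
      rw [hd]
      exact one_ne_zero
  set μ := dotR a q with hμdef
  set p : Fin m → ℝ := fun i => -(μ⁻¹ * q i) with hpdef
  have hap : dotR a p = -1 := by
    have h1 : dotR a p = ∑ i, -(μ⁻¹ * (a i * q i)) :=
      Finset.sum_congr rfl fun i _ => by rw [hpdef]; ring
    rw [h1, Finset.sum_neg_distrib, ← Finset.mul_sum, ← dotR, ← hμdef,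
      inv_mul_cancel₀ hμ]
  have hpk : p k = μ⁻¹ := by rw [hpdef]; simp [hqk]
  set sfun : (Fin m → ℝ) → (Fin m → ℝ) :=
    fun x => fun i => x i + (dotR a x + c) * p i + x k * q i with hsfun
  set S : Matrix (Fin m) (Fin m) ℝ :=
    Matrix.of fun i j => (if i = j then (1:ℝ) else 0) + p i * a j
      + q i * (if j = k then 1 else 0) with hSdef
  set sh : Fin m → ℝ := fun i => c * p i with hshdef
  have hmv : ∀ x, S.mulVec x + sh = sfun x := by
    intro x
    rw [hSdef, mulVec_aff2]
    funext i
    rw [hsfun]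
    simp only [hshdef]
    ring
  have hdots : ∀ x, dotR a (sfun x) + c = μ * x k := by
    intro x
    rw [hsfun]
    simp only []
    rw [dotR_affcomb a x p q (dotR a x + c) (x k), hap, ← hμdef]
    ring
  have hks : ∀ x, (sfun x) k = μ⁻¹ * (dotR a x + c) := by
    intro x
    show x k + (dotR a x + c) * p k + x k * q k = μ⁻¹ * (dotR a x + c)
    rw [hpk, hqk]
    ring
  have hinv : ∀ x, sfun (sfun x) = x := by
    intro x
    funext i
    show sfun x i + (dotR a (sfun x) + c) * p i + (sfun x) k * q i = x i
    rw [hdots x, hks x]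
    show x i + (dotR a x + c) * p i + x k * q i
        + μ * x k * p i + μ⁻¹ * (dotR a x + c) * q i = x i
    rw [hpdef]
    simp only []
    field_simp
    ring
  have hsinv : ∀ x, S.mulVec (S.mulVec x + sh) + sh = x := by
    intro x
    rw [hmv x, hmv (sfun x), hinv x]
  have hsh0 : S.mulVec sh + sh = 0 := by
    have h0 := hsinv 0
    rwa [Matrix.mulVec_zero, zero_add] at h0
  have hSy : ∀ y, S.mulVec (S.mulVec y) = y := by
    intro y
    have h1 := hsinv y
    rw [Matrix.mulVec_add] at h1
    have h2 : S.mulVec (S.mulVec y) + (S.mulVec sh + sh) = y := by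
      rw [← add_assoc]; exact h1
    rw [hsh0, add_zero] at h2
    exact h2
  have hSS : S * S = 1 := by
    apply mat_ext_mulVec
    intro x
    rw [← Matrix.mulVec_mulVec, hSy, Matrix.one_mulVec]
  refine ⟨S, sh, μ, hμ, hSS, hsinv, ?_, ?_⟩
  · intro x
    rw [hmv x]
    exact hdots x
  · intro x
    rw [hmv x]
    exact hks x


lemma dot_self_ne_zero {a : Fin m → ℝ} (ha : a ≠ 0) : dotR a a ≠ 0 := by
  intro h0
  apply ha
  funext i
  have hnn : ∀ i ∈ Finset.univ, (0:ℝ) ≤ a i * a i := fun i _ => mul_self_nonneg _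
  have := (Finset.sum_eq_zero_iff_of_nonneg hnn).mp h0 i (Finset.mem_univ i)
  exact mul_self_eq_zero.mp this

lemma dotR_scale (a f : Fin m → ℝ) (r : ℝ) :
    dotR a (fun i => r * f i) = r * dotR a f := by
  unfold dotR
  rw [Finset.mul_sum]
  exact Finset.sum_congr rfl fun i _ => by ring

lemma dotR_sub2 (a y z : Fin m → ℝ) (r : ℝ) :
    dotR a (fun i => r * (y i - z i)) = r * (dotR a y - dotR a z) := by
  unfold dotR
  have h1 : (∑ i, a i * y i) - (∑ i, a i * z i) = ∑ i, (a i * y i - a i * z i) :=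
    by rw [Finset.sum_sub_distrib]
  rw [h1, Finset.mul_sum]
  exact Finset.sum_congr rfl fun i _ => by ring

lemma dotR_addfun (a y v : Fin m → ℝ) :
    dotR a (fun i => y i + v i) = dotR a y + dotR a v := by
  unfold dotR
  rw [← Finset.sum_add_distrib]
  exact Finset.sum_congr rfl fun i _ => by ring

lemma RmatMulCol (g w : Fin m → ℝ) (B : Matrix (Fin m) (Fin m) ℝ) (k : Fin m)
    (hw : ∀ i, w i * dotR g (fun l => B l k) = B i k) :
    ∀ i, (Rmat g w 0 * B) i k = 0 := by
  intro i
  rw [Matrix.mul_apply]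
  have hsplit : ∀ l ∈ Finset.univ, Rmat g w 0 i l * B l k
      = (if i = l then (1:ℝ) else 0) * B l k - w i * (g l * B l k) := by
    intro l _
    have : Rmat g w 0 i l = (if i = l then (1:ℝ) else 0) - (1-0) * w i * g l := rfl
    rw [this, sub_mul]
    ring_nf
  rw [Finset.sum_congr rfl hsplit, Finset.sum_sub_distrib]
  rw [Finset.sum_eq_single i (fun l _ hl => by rw [if_neg (Ne.symm hl), zero_mul])
    (fun h => absurd (Finset.mem_univ i) h), if_pos rfl, one_mul]
  rw [← Finset.mul_sum, ← dotR, hw i, sub_self]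

lemma eval_pb_r (g w : Fin m → ℝ) (e t : ℝ) (x : Fin m → ℝ)
    (Q : MvPolynomial (Fin m) ℝ) :
    eval x (affinePullback (Rmat g w t) (vvec w e t) Q) = eval (rapp g w e t x) Q := by
  rw [eval_pb, mulVec_r]

lemma rimg_H (g w : Fin m → ℝ) (e : ℝ) (hgw : dotR g w = 1) {t : ℝ} (ht : t ≠ 0)
    (H : Set (Fin m → ℝ)) (a : Fin m → ℝ) (c : ℝ)
    (hHm : ∀ x, x ∈ H ↔ dotR a x + c = 0)
    (hstab : ∀ s : ℝ, s ≠ 0 → ∀ x, (dotR a (rapp g w e s x) + c = 0 ↔ dotR a x + c = 0)) :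
    (fun x => (Rmat g w t).mulVec x + vvec w e t) '' H = H := by
  ext y
  constructor
  · rintro ⟨x, hx, rfl⟩
    show (Rmat g w t).mulVec x + vvec w e t ∈ H
    rw [mulVec_r]
    exact (hHm _).mpr ((hstab t ht x).mpr ((hHm x).mp hx))
  · intro hy
    refine ⟨rapp g w e t⁻¹ y, ?_, ?_⟩
    · exact (hHm _).mpr ((hstab t⁻¹ (inv_ne_zero ht) y).mpr ((hHm y).mp hy))
    · show (Rmat g w t).mulVec (rapp g w e t⁻¹ y) + vvec w e t = y
      rw [mulVec_r, rapp_rapp g w e hgw, mul_inv_cancel₀ ht, rapp_one]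

lemma dotR_comm (x y : Fin m → ℝ) : dotR x y = dotR y x :=
  Finset.sum_congr rfl fun i _ => mul_comm _ _

lemma dotR_sub_scale (x u v : Fin m → ℝ) (r : ℝ) :
    dotR x (fun j => u j - r * v j) = dotR x u - r * dotR x v := by
  unfold dotR
  have h1 : (∑ j, x j * u j) - r * (∑ j, x j * v j)
      = ∑ j, (x j * u j - r * (x j * v j)) := by
    rw [Finset.mul_sum, ← Finset.sum_sub_distrib]
  rw [h1]
  exact Finset.sum_congr rfl fun j _ => by ring

end IShelp

open IShelp in

/-- Under pair-unisolvence of `P` with respect to `(Π, H)`, if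
`Q₁ ∈ Π_{|H}` interpolates `f` on `P ∩ H` and `Q₂ ∈ Π_{|H̄}` satisfies
`Q₂(p) = (f(p) - Q₁(p))/Q_H(p)` on `P \ H`, then `Q = Q₁ + Q_H·Q₂ ∈ Π` is the unique
polynomial in `Π` interpolating `f` on `P`. -/
theorem interpolant_split (m : ℕ) (hm : 0 < m)
    (Pspace : Submodule ℝ (MvPolynomial (Fin m) ℝ))
    (P : Set (Fin m → ℝ)) (hPfin : P.Finite) (hPne : P.Nonempty)
    (QH : MvPolynomial (Fin m) ℝ)
    -- `Q_H ∈ Π_{m,1,1} \ {0}` cutting out a hyperplane of co-dimension 1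
    (hQHdeg : QH.totalDegree = 1)
    (H : Set (Fin m → ℝ)) (hH : H = {x | eval x QH = 0})
    -- every affine transformation mapping `H` onto `ℝ^{m-1} × {0}` is canonical w.r.t. `Π`
    (hcanon : ∀ (B' : Matrix (Fin m) (Fin m) ℝ) (b' : Fin m → ℝ), IsUnit B' →
      (fun x => B'.mulVec x + b') '' H = {x | x ⟨m - 1, Nat.sub_lt hm Nat.one_pos⟩ = 0} →
      ∀ Q ∈ Pspace, affinePullback B' b' Q ∈ Pspace)
    -- a fixed affine transformation `τ_H` with `τ_H(H) = ℝ^{m-1} × {0}`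
    (B : Matrix (Fin m) (Fin m) ℝ) (b : Fin m → ℝ) (hB : IsUnit B)
    (himg : (fun x => B.mulVec x + b) '' H
      = {x | x ⟨m - 1, Nat.sub_lt hm Nat.one_pos⟩ = 0})
    -- (i): there is no `Q ∈ Π_{|H}` with `τ_H^* Q ≠ 0` vanishing on `P ∩ H`
    (hi : ¬ ∃ Q : MvPolynomial (Fin m) ℝ,
      (Q ∈ Pspace ∧ affinePullback B b Q ∈ Pspace ∧
        ∀ d ∈ (affinePullback B b Q).support, d ⟨m - 1, Nat.sub_lt hm Nat.one_pos⟩ = 0) ∧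
      affinePullback B b Q ≠ 0 ∧ ∀ x ∈ P ∩ H, eval x Q = 0)
    -- (ii): there is no nonzero `Q ∈ Π_{|H̄}` vanishing on `P \ H`
    (hii : ¬ ∃ Q : MvPolynomial (Fin m) ℝ,
      QH * Q ∈ Pspace ∧ Q ≠ 0 ∧ ∀ x ∈ P \ H, eval x Q = 0)
    -- the function to interpolate and the two partial interpolants
    (f : (Fin m → ℝ) → ℝ)
    (Q₁ : MvPolynomial (Fin m) ℝ)
    -- `Q₁ ∈ Π_{|H}`
    (hQ₁mem : Q₁ ∈ Pspace ∧ affinePullback B b Q₁ ∈ Pspace ∧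
      ∀ d ∈ (affinePullback B b Q₁).support, d ⟨m - 1, Nat.sub_lt hm Nat.one_pos⟩ = 0)
    (Q₂ : MvPolynomial (Fin m) ℝ)
    -- `Q₂ ∈ Π_{|H̄}`
    (hQ₂mem : QH * Q₂ ∈ Pspace)
    -- (i): `Q₁(p) = f(p)` for all `p ∈ P ∩ H`
    (hQ₁int : ∀ x ∈ P ∩ H, eval x Q₁ = f x)
    -- (ii): `Q₂(p) = (f(p) - Q₁(p))/Q_H(p)` for all `p ∈ P \ H`
    (hQ₂int : ∀ x ∈ P \ H, eval x Q₂ = (f x - eval x Q₁) / eval x QH) :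
    -- conclusion: `Q = Q₁ + Q_H·Q₂ ∈ Π` is the unique interpolant of `f` on `P` in `Π`
    Q₁ + QH * Q₂ ∈ Pspace ∧ (∀ x ∈ P, eval x (Q₁ + QH * Q₂) = f x) ∧
      ∀ Q' ∈ Pspace, (∀ x ∈ P, eval x Q' = f x) → Q' = Q₁ + QH * Q₂ := by
  classical
  set k : Fin m := ⟨m - 1, Nat.sub_lt hm Nat.one_pos⟩ with hkdef
  -- existence
  have hQmem : Q₁ + QH * Q₂ ∈ Pspace := Submodule.add_mem _ hQ₁mem.1 hQ₂mem
  have hint : ∀ x ∈ P, eval x (Q₁ + QH * Q₂) = f x := by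
    intro x hx
    by_cases hxH : x ∈ H
    · have h0 : eval x QH = 0 := by rw [hH] at hxH; exact hxH
      rw [map_add, map_mul, h0, zero_mul, add_zero]
      exact hQ₁int x ⟨hx, hxH⟩
    · have h0 : eval x QH ≠ 0 := by rw [hH] at hxH; exact hxH
      rw [map_add, map_mul, hQ₂int x ⟨hx, hxH⟩]
      field_simp
      ring
  refine ⟨hQmem, hint, ?_⟩
  intro Q' hQ'mem hQ'int
  set D := Q' - (Q₁ + QH * Q₂) with hDdef
  have hDmem : D ∈ Pspace := Submodule.sub_mem _ hQ'mem hQmem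
  have hDvan : ∀ x ∈ P, eval x D = 0 := by
    intro x hx
    rw [hDdef, map_sub, hQ'int x hx, hint x hx, sub_self]
  suffices hD0 : D = 0 by
    have : Q' - (Q₁ + QH * Q₂) = 0 := hD0
    linear_combination this
  -- representation of QH
  set a : Fin m → ℝ := fun i => coeff (Finsupp.single i 1) QH with hadef
  set c : ℝ := coeff 0 QH with hcdef
  have hrep : QH = affP a c := rep_of_totalDegree_le_one (le_of_eq hQHdeg)
  have heval : ∀ x, eval x QH = dotR a x + c := fun x => by rw [hrep, eval_affP]
  have haz : a ≠ 0 := by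
    intro h0
    have hqc : QH = C c := by
      rw [hrep, affP, h0]
      simp
    rw [hqc, totalDegree_C] at hQHdeg
    exact absurd hQHdeg.symm one_ne_zero
  have hHmem : ∀ x, x ∈ H ↔ dotR a x + c = 0 := by
    intro x
    rw [hH, Set.mem_setOf_eq, heval]

  -- involution swapping H and the coordinate hyperplane
  obtain ⟨S, sh, μ, hμ, hSS, hsinv, hsdot, hsk⟩ := s_exists a haz k c
  have hSunit : IsUnit S := ⟨⟨S, S, hSS, hSS⟩, rfl⟩
  have hSimg : (fun x => S.mulVec x + sh) '' H = {x | x k = 0} := by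
    ext y
    constructor
    · rintro ⟨x, hxH, rfl⟩
      show (S.mulVec x + sh) k = 0
      rw [hsk x, (hHmem x).mp hxH, mul_zero]
    · intro hy
      refine ⟨S.mulVec y + sh, (hHmem _).mpr ?_, hsinv y⟩
      rw [hsdot y]
      have hyk : y k = 0 := hy
      rw [hyk, mul_zero]
  -- closure of Pspace under pullback by affine maps preserving H
  have stabH : ∀ (R : Matrix (Fin m) (Fin m) ℝ) (rv : Fin m → ℝ), IsUnit R →
      ((fun x => R.mulVec x + rv) '' H = H) →
      ∀ Q ∈ Pspace, affinePullback R rv Q ∈ Pspace := by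
    intro R rv hR hRimg Q hQ
    have h1 : affinePullback S sh Q ∈ Pspace := hcanon S sh hSunit hSimg Q hQ
    have hcompimg : (fun x => (S * R).mulVec x + (S.mulVec rv + sh)) '' H
        = {x | x k = 0} := by
      have hfun : (fun x => (S * R).mulVec x + (S.mulVec rv + sh))
          = (fun y => S.mulVec y + sh) ∘ (fun x => R.mulVec x + rv) := by
        funext x
        simp only [Function.comp_apply]
        rw [Matrix.mulVec_add, Matrix.mulVec_mulVec]
        abel
      rw [hfun, Set.image_comp, hRimg, hSimg]
    have h2 := hcanon (S * R) (S.mulVec rv + sh) (hSunit.mul hR) hcompimg _ h1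
    rw [pb_pb] at h2
    rw [show S * (S * R) = R from by rw [← mul_assoc, hSS, one_mul]] at h2
    rwa [hsinv rv] at h2
  -- the k-th row of τ is proportional to QH
  have hmemH_of : ∀ x, dotR a x + c = 0 → (B.mulVec x + b) k = 0 := by
    intro x hx
    have hxH : x ∈ H := (hHmem x).mpr hx
    have hmem : B.mulVec x + b ∈ {x : Fin m → ℝ | x k = 0} := by
      rw [← himg]
      exact ⟨x, hxH, rfl⟩
    exact hmem
  have hnaa : dotR a a ≠ 0 := dot_self_ne_zero haz
  set rowk : Fin m → ℝ := fun j => B k j with hrowkdef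
  have hmvk : ∀ x : Fin m → ℝ, (B.mulVec x + b) k = dotR rowk x + b k := by
    intro x
    simp [Matrix.mulVec, dotProduct, dotR, hrowkdef]
  set x₀ : Fin m → ℝ := fun i => (-c * (dotR a a)⁻¹) * a i with hx₀def
  have hx₀ : dotR a x₀ + c = 0 := by
    rw [hx₀def, dotR_scale, mul_assoc, inv_mul_cancel₀ hnaa]
    ring
  have hL0 : ∀ w' : Fin m → ℝ, dotR a w' = 0 → dotR rowk w' = 0 := by
    intro w' hw'
    have h1 : dotR a (fun i => x₀ i + w' i) + c = 0 := by
      rw [dotR_addfun, hw']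
      simpa using hx₀
    have h2 := hmemH_of _ h1
    have h3 := hmemH_of x₀ hx₀
    rw [hmvk] at h2 h3
    rw [dotR_addfun] at h2
    linarith
  set lam : ℝ := dotR rowk a * (dotR a a)⁻¹ with hlamdef
  have hrowlam : ∀ j, rowk j = lam * a j := by
    have hz0 : (fun j => rowk j - lam * a j) = 0 := by
      by_contra hz
      apply dot_self_ne_zero hz
      have haz' : dotR a (fun j => rowk j - lam * a j) = 0 := by
        rw [dotR_sub_scale, hlamdef, dotR_comm a rowk]
        field_simp
        ring
      have hrz : dotR rowk (fun j => rowk j - lam * a j) = 0 := hL0 _ haz'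
      have : dotR (fun j => rowk j - lam * a j) (fun j => rowk j - lam * a j)
          = dotR (fun j => rowk j - lam * a j) rowk
            - lam * dotR (fun j => rowk j - lam * a j) a := by
        exact dotR_sub_scale _ rowk a lam
      rw [this, dotR_comm _ rowk, hrz, dotR_comm _ a, haz', mul_zero, sub_zero]
    intro j
    have := congrFun hz0 j
    simp only [Pi.zero_apply] at this
    linarith
  have hbk : b k = lam * c := by
    have h3 := hmemH_of x₀ hx₀
    rw [hmvk] at h3
    have : dotR rowk x₀ = lam * dotR a x₀ := by
      rw [dotR_comm rowk x₀, dotR_comm a x₀]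
      have : dotR x₀ rowk = dotR x₀ (fun j => lam * a j) := by
        congr 1
        funext j
        exact hrowlam j
      rw [this, dotR_scale]
    have hax₀ : dotR a x₀ = -c := by linarith [hx₀]
    rw [this, hax₀] at h3
    linarith
  have hlam : lam ≠ 0 := by
    intro h0
    have hrow0 : ∀ j, B k j = 0 := by
      intro j
      have := hrowlam j
      rw [h0, zero_mul] at this
      exact this
    have hdet : IsUnit B.det := (Matrix.isUnit_iff_isUnit_det B).mp hB
    have h1 : B * B⁻¹ = 1 := Matrix.mul_nonsing_inv B hdet
    have h2 : (B * B⁻¹) k k = (1 : Matrix (Fin m) (Fin m) ℝ) k k := by rw [h1]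
    rw [Matrix.mul_apply] at h2
    rw [Finset.sum_eq_zero (fun j _ => by rw [hrow0 j, zero_mul])] at h2
    rw [Matrix.one_apply_eq] at h2
    exact zero_ne_one h2
  have hrowk : ∀ x : Fin m → ℝ, (B.mulVec x + b) k = lam * (dotR a x + c) := by
    intro x
    rw [hmvk, hbk]
    have : dotR rowk x = lam * dotR a x := by
      have h1 : dotR rowk x = dotR x rowk := dotR_comm _ _
      have h2 : dotR x rowk = dotR x (fun j => lam * a j) := by
        congr 1
        funext j
        exact hrowlam j
      rw [h1, h2, dotR_scale, dotR_comm x a]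
    rw [this]
    ring

  -- column k of B
  set u : Fin m → ℝ := fun i => B i k with hudef
  have hu0 : u ≠ 0 := by
    intro h0
    have hdet : IsUnit B.det := (Matrix.isUnit_iff_isUnit_det B).mp hB
    have h1 : B⁻¹ * B = 1 := Matrix.nonsing_inv_mul B hdet
    have h2 : (B⁻¹ * B) k k = (1 : Matrix (Fin m) (Fin m) ℝ) k k := by rw [h1]
    rw [Matrix.mul_apply] at h2
    rw [Finset.sum_eq_zero (fun j _ => by
      have hj : B j k = 0 := by
        have := congrFun h0 j
        simpa [hudef] using this
      rw [hj, mul_zero])] at h2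
    rw [Matrix.one_apply_eq] at h2
    exact zero_ne_one h2
  -- membership of all Phi coefficients
  have pbr_mem : ∀ (g w : Fin m → ℝ) (e : ℝ), dotR g w = 1 →
      (∀ s : ℝ, s ≠ 0 → ∀ x, (dotR a (rapp g w e s x) + c = 0 ↔ dotR a x + c = 0)) →
      ∀ F ∈ Pspace, ∀ j : ℕ, (PhiMap g w e F).coeff j ∈ Pspace := by
    intro g w e hgw hstab F hF j
    by_cases hj : j ≤ (PhiMap g w e F).natDegree
    · refine coeffs_mem Pspace _ (fun j => (PhiMap g w e F).coeff j) ?_ j hj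
      intro t ht
      rw [← pb_r_eq_sum]
      exact stabH _ _ (Rmat_unit g w hgw ht) (rimg_H g w e hgw ht H a c hHmem hstab) F hF
    · rw [Polynomial.coeff_eq_zero_of_natDegree_lt (by omega)]
      exact Submodule.zero_mem _
  have hstab_a : ∀ (w : Fin m → ℝ), dotR a w = 1 →
      ∀ s : ℝ, s ≠ 0 → ∀ x, (dotR a (rapp a w c s x) + c = 0 ↔ dotR a x + c = 0) := by
    intro w hw s hs x
    have h1 : dotR a (rapp a w c s x) + c = s * (dotR a x + c) := by
      rw [dot_rapp a a w c s x, hw]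
      ring
    rw [h1]
    constructor
    · intro h
      rcases mul_eq_zero.mp h with h' | h'
      · exact absurd h' hs
      · exact h'
    · intro h
      rw [h, mul_zero]
  by_cases hda : dotR a u = 0
  · -- degenerate case: dotR a u = 0
    set gψ : Fin m → ℝ := fun i => (dotR u u)⁻¹ * u i with hgψdef
    have hnuu : dotR u u ≠ 0 := dot_self_ne_zero hu0
    have hgψu : dotR gψ u = 1 := by
      rw [hgψdef, dotR_comm, dotR_scale, dotR_comm u u, inv_mul_cancel₀ hnuu]
    have hrapp_a : ∀ (e' s : ℝ) (x : Fin m → ℝ),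
        dotR a (rapp gψ u e' s x) = dotR a x := by
      intro e' s x
      rw [dot_rapp a gψ u e' s x, hda, mul_zero, sub_zero]
    have hstabψ : ∀ (e' : ℝ) (s : ℝ), s ≠ 0 → ∀ x,
        (dotR a (rapp gψ u e' s x) + c = 0 ↔ dotR a x + c = 0) := by
      intro e' s _ x
      rw [hrapp_a]
    have hFv0 : ∀ v : Fin m → ℝ, dotR a v = 1 →
        D = affinePullback (Rmat a v 0) (vvec v c 0) D := by
      intro v hav
      by_contra hne
      set F := D - affinePullback (Rmat a v 0) (vvec v c 0) D with hFdef
      have hFne : F ≠ 0 := sub_ne_zero.mpr hne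
      have hT0m : (PhiMap a v c D).coeff 0 ∈ Pspace :=
        pbr_mem a v c hav (hstab_a v hav) D hDmem 0
      rw [coeff_zero_Phi] at hT0m
      have hFmem : F ∈ Pspace := Submodule.sub_mem _ hDmem hT0m
      have hFvanH : ∀ x, dotR a x + c = 0 → eval x F = 0 := by
        intro x hx
        rw [hFdef, map_sub, eval_pb_r]
        have hxfix : rapp a v c 0 x = x := by
          funext i
          show x i - (1-0) * (dotR a x + c) * v i = x i
          rw [hx]
          ring
        rw [hxfix, sub_self]
      by_cases hW : ∀ e' : ℝ, affinePullback (Rmat gψ u 0) (vvec u e' 0) F = 0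
      · refine hFne (MvPolynomial.funext fun x => ?_)
        rw [map_zero]
        have h1 := hW (-(dotR gψ x))
        have h2 : eval x (affinePullback (Rmat gψ u 0) (vvec u (-(dotR gψ x)) 0) F)
            = eval x F := by
          rw [eval_pb_r]
          have hpt : rapp gψ u (-(dotR gψ x)) 0 x = x := by
            funext i
            show x i - (1-0) * (dotR gψ x + -(dotR gψ x)) * u i = x i
            ring
          rw [hpt]
        rw [h1, map_zero] at h2
        exact h2.symm
      · push_neg at hW
        obtain ⟨e', hWne⟩ := hW
        have hWmem : affinePullback (Rmat gψ u 0) (vvec u e' 0) F ∈ Pspace := by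
          have hh := pbr_mem gψ u e' hgψu (hstabψ e') F hFmem 0
          rwa [coeff_zero_Phi] at hh
        have hpbWmem := hcanon B b hB himg _ hWmem
        have hXfW : ∀ d ∈ (affinePullback B b
            (affinePullback (Rmat gψ u 0) (vvec u e' 0) F)).support, d k = 0 := by
          rw [pb_pb]
          apply Xfree_pb
          apply RmatMulCol
          intro i
          have hcol : dotR gψ (fun l => B l k) = dotR gψ u := by rw [hudef]
          rw [hcol, hgψu, mul_one]
        have hvanW : ∀ x ∈ P ∩ H,
            eval x (affinePullback (Rmat gψ u 0) (vvec u e' 0) F) = 0 := by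
          intro x hx
          rw [eval_pb_r]
          apply hFvanH
          rw [hrapp_a]
          exact (hHmem x).mp hx.2
        have hpbWne : affinePullback B b
            (affinePullback (Rmat gψ u 0) (vvec u e' 0) F) ≠ 0 := by
          intro h0
          exact hWne (pb_inj hB b (by rw [h0, map_zero]))
        exact hi ⟨_, ⟨hWmem, hpbWmem, hXfW⟩, hpbWne, hvanW⟩
    have key : ∀ (y z : Fin m → ℝ), dotR a y + c ≠ 0 → dotR a z + c = 0 →
        eval y D = eval z D := by
      intro y z hy hz
      set v : Fin m → ℝ := fun i => (dotR a y + c)⁻¹ * (y i - z i) with hvdef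
      have hav : dotR a v = 1 := by
        rw [hvdef, dotR_sub2]
        have hyz : dotR a y - dotR a z = dotR a y + c := by linarith
        rw [hyz, inv_mul_cancel₀ hy]
      have h1 := hFv0 v hav
      calc eval y D = eval y (affinePullback (Rmat a v 0) (vvec v c 0) D) := by
            rw [← h1]
        _ = eval (rapp a v c 0 y) D := eval_pb_r _ _ _ _ _ _
        _ = eval z D := by
            have hpt : rapp a v c 0 y = z := by
              funext i
              show y i - (1-0) * (dotR a y + c) * v i = z i
              have hvi : v i = (dotR a y + c)⁻¹ * (y i - z i) := rfl
              rw [hvi]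
              field_simp
              ring
            rw [hpt]
    have hDconst : ∀ x, eval x D = eval x₀ D := by
      intro x
      by_cases hxH : dotR a x + c = 0
      · set y : Fin m → ℝ := fun i => x i + (dotR a a)⁻¹ * a i with hydef
        have hay : dotR a y + c = 1 := by
          rw [hydef, dotR_addfun a x (fun i => (dotR a a)⁻¹ * a i), dotR_scale,
            inv_mul_cancel₀ hnaa]
          linarith
        have hy1 : dotR a y + c ≠ 0 := by
          rw [hay]
          exact one_ne_zero
        have h1 := key y x hy1 hxH
        have h2 := key y x₀ hy1 hx₀
        rw [← h1, h2]
      · exact key x x₀ hxH hx₀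
    obtain ⟨p₀, hp₀⟩ := hPne
    have hDC : D = C (eval x₀ D) := MvPolynomial.funext fun x => by
      rw [hDconst x, eval_C]
    have hzero : eval x₀ D = 0 := by
      rw [← hDconst p₀]
      exact hDvan p₀ hp₀
    rw [hDC, hzero, map_zero]
  · -- nondegenerate case
    set w : Fin m → ℝ := fun i => (dotR a u)⁻¹ * u i with hwdef
    have hgw : dotR a w = 1 := by rw [hwdef, dotR_scale, inv_mul_cancel₀ hda]
    have hstabw := hstab_a w hgw
    have hT0mem : (PhiMap a w c D).coeff 0 ∈ Pspace := pbr_mem a w c hgw hstabw D hDmem 0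
    rw [coeff_zero_Phi] at hT0mem
    have hXf : ∀ d ∈ (affinePullback B b
        (affinePullback (Rmat a w 0) (vvec w c 0) D)).support, d k = 0 := by
      rw [pb_pb]
      apply Xfree_pb
      apply RmatMulCol
      intro i
      have hcol : dotR a (fun l => B l k) = dotR a u := by rw [hudef]
      rw [hcol, hwdef]
      show (dotR a u)⁻¹ * u i * dotR a u = B i k
      rw [mul_comm, ← mul_assoc, mul_inv_cancel₀ hda, one_mul]
    have hvan : ∀ x ∈ P ∩ H, eval x (affinePullback (Rmat a w 0) (vvec w c 0) D) = 0 := by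
      intro x hx
      rw [eval_pb_r]
      have hxfix : rapp a w c 0 x = x := by
        funext i
        show x i - (1-0) * (dotR a x + c) * w i = x i
        rw [(hHmem x).mp hx.2]
        ring
      rw [hxfix]
      exact hDvan x hx.1
    have hpbmem : affinePullback B b (affinePullback (Rmat a w 0) (vvec w c 0) D)
        ∈ Pspace := hcanon B b hB himg _ hT0mem
    have hpb0 : affinePullback B b (affinePullback (Rmat a w 0) (vvec w c 0) D) = 0 := by
      by_contra hne
      exact hi ⟨_, ⟨hT0mem, hpbmem, hXf⟩, hne, hvan⟩
    have hN0 : affinePullback (Rmat a w 0) (vvec w c 0) D = 0 :=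
      pb_inj hB b (by rw [hpb0, map_zero])
    have hsum : D = ∑ j ∈ Finset.range ((PhiMap a w c D).natDegree + 1),
        (PhiMap a w c D).coeff j := by
      have h1 := pb_r_eq_sum a w c 1 D
      rw [pb_r_one] at h1
      simpa using h1
    have hdvd : QH ∣ D := by
      rw [hsum]
      apply Finset.dvd_sum
      intro j hjmem
      by_cases hj0 : j = 0
      · rw [hj0, coeff_zero_Phi, hN0]
        exact dvd_zero _
      · rw [hrep]
        exact affP_dvd_coeff a w c D j (by omega)
    obtain ⟨D₁, hD₁⟩ := hdvd
    have hD₁van : ∀ x ∈ P \ H, eval x D₁ = 0 := by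
      intro x hx
      have hQHx : eval x QH ≠ 0 := by
        intro h0
        exact hx.2 (by rw [hH]; exact h0)
      have h1 := hDvan x hx.1
      rw [hD₁, map_mul] at h1
      exact (mul_eq_zero.mp h1).resolve_left hQHx
    have hD₁0 : D₁ = 0 := by
      by_contra hne
      refine hii ⟨D₁, ?_, hne, hD₁van⟩
      rw [← hD₁]
      exact hDmem
    rw [hD₁, hD₁0, mul_zero]

end
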